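/- Let m ≥ 1 and L > 0, let f : ℝ^m → ℝ be differentiable with L-Lipschitz gradient on the nonnegative orthant ℝ^m_+, and let λ* ∈ ℝ^m_+ satisfy f(λ*) ≤ f(μ) for all μ ∈ ℝ^m_+. Fix λ ∈ ℝ^m_+, write a := ∇f(λ), and let J' := {i : a_i ≥ 0 and λ_i < a_i/L}. Then Σ_{i ∈ J'} a_i·λ_i ≤ 2·(f(λ) − f(λ*)). -/

import Mathlib

open scoped RealInnerProductSpace

theorem stmt_9 (m : ℕ) (hm : 1 ≤ m) (L : ℝ) (hL : 0 < L)
    (f : EuclideanSpace ℝ (Fin m) → ℝ) (hf : Differentiable ℝ f)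
    (hlip : ∀ x : EuclideanSpace ℝ (Fin m), (∀ i, 0 ≤ x i) →
      ∀ y : EuclideanSpace ℝ (Fin m), (∀ i, 0 ≤ y i) →
      ‖gradient f x - gradient f y‖ ≤ L * ‖x - y‖)
    (lstar : EuclideanSpace ℝ (Fin m)) (hstar : ∀ i, 0 ≤ lstar i)
    (hmin : ∀ μ : EuclideanSpace ℝ (Fin m), (∀ i, 0 ≤ μ i) → f lstar ≤ f μ)
    (lam : EuclideanSpace ℝ (Fin m)) (hlam : ∀ i, 0 ≤ lam i) :
    ∑ i ∈ Finset.univ.filter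
        (fun i => 0 ≤ gradient f lam i ∧ lam i < gradient f lam i / L),
      gradient f lam i * lam i ≤ 2 * (f lam - f lstar) := by
  classical
  set a := gradient f lam with ha
  set J : Finset (Fin m) := Finset.univ.filter (fun i => 0 ≤ a i ∧ lam i < a i / L)
    with hJ
  set v : EuclideanSpace ℝ (Fin m) :=
    (WithLp.equiv 2 (Fin m → ℝ)).symm (fun i => if i ∈ J then -lam i else 0) with hvdef
  have hvapp : ∀ i, v i = if i ∈ J then -lam i else 0 := fun i => rfl
  -- key inequality on J
  have hkey : ∀ i ∈ J, L * lam i ≤ a i := by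
    intro i hi
    rw [hJ, Finset.mem_filter] at hi
    have := hi.2.2
    rw [lt_div_iff₀ hL] at this
    nlinarith [this]
  -- nonnegativity along the segment
  have hseg : ∀ t ∈ Set.Icc (0:ℝ) 1, ∀ i, 0 ≤ (lam + t • v) i := by
    intro t ht i
    have : (lam + t • v) i = lam i + t * v i := rfl
    rw [this, hvapp]
    by_cases hi : i ∈ J
    · simp only [hi, if_pos]
      have := hlam i
      nlinarith [ht.1, ht.2]
    · simp [hi, hlam i]
  -- derivative of t ↦ f (lam + t • v)
  set φ : ℝ → ℝ := fun t => ⟪gradient f (lam + t • v), v⟫ with hφ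
  have hg : ∀ t : ℝ, HasDerivAt (fun t : ℝ => f (lam + t • v)) (φ t) t := by
    intro t
    have hc : HasDerivAt (fun t : ℝ => lam + t • v) v t := by
      simpa using ((hasDerivAt_id t).smul_const v).const_add lam
    have hgrad := (hf (lam + t • v)).hasGradientAt
    have := hgrad.hasFDerivAt.comp_hasDerivAt t hc
    simpa [hφ, InnerProductSpace.toDual_apply_apply, Function.comp_def] using this
  -- auxiliary function
  set h : ℝ → ℝ := fun t => f (lam + t • v) - t * φ 0 - L / 2 * ‖v‖ ^ 2 * t ^ 2 with hh
  have hd : ∀ t : ℝ, HasDerivAt h (φ t - φ 0 - L * ‖v‖ ^ 2 * t) t := by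
    intro t
    have h1 := (hg t).sub ((hasDerivAt_id t).mul_const (φ 0))
    have h2 := (hasDerivAt_pow 2 t).const_mul (L / 2 * ‖v‖ ^ 2)
    have := h1.sub h2
    exact this.congr_deriv (by ring)
  -- derivative is nonpositive on (0,1)
  have hderiv_le : ∀ t ∈ Set.Ioo (0:ℝ) 1, φ t - φ 0 - L * ‖v‖ ^ 2 * t ≤ 0 := by
    intro t ht
    have h0 : φ 0 = ⟪gradient f lam, v⟫ := by simp [hφ]
    have hsub : φ t - φ 0 = ⟪gradient f (lam + t • v) - gradient f lam, v⟫ := by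
      rw [h0, hφ, inner_sub_left]
    have h1 : φ t - φ 0 ≤ ‖gradient f (lam + t • v) - gradient f lam‖ * ‖v‖ := by
      rw [hsub]; exact real_inner_le_norm _ _
    have h2 : ‖gradient f (lam + t • v) - gradient f lam‖ ≤ L * (t * ‖v‖) := by
      have := hlip (lam + t • v) (hseg t ⟨le_of_lt ht.1, le_of_lt ht.2⟩) lam hlam
      have he : lam + t • v - lam = t • v := by abel
      rw [he] at this
      rwa [norm_smul, Real.norm_eq_abs, abs_of_pos ht.1] at this
    have hv0 : (0:ℝ) ≤ ‖v‖ := norm_nonneg _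
    nlinarith [h1, h2, mul_le_mul_of_nonneg_right h2 hv0]
  -- h is antitone on [0,1]
  have hanti : AntitoneOn h (Set.Icc 0 1) := by
    apply antitoneOn_of_deriv_nonpos (convex_Icc 0 1)
    · exact fun t _ => ((hd t).continuousAt).continuousWithinAt
    · intro t ht
      rw [interior_Icc] at ht
      exact (hd t).differentiableAt.differentiableWithinAt
    · intro t ht
      rw [interior_Icc] at ht
      rw [(hd t).deriv]
      exact hderiv_le t ht
  have h10 : h 1 ≤ h 0 := hanti (by norm_num) (by norm_num) zero_le_one
  -- compute h 0 and h 1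
  have hh0 : h 0 = f lam := by simp [hh]
  -- sums
  set S : ℝ := ∑ i ∈ J, a i * lam i with hS
  set T : ℝ := ∑ i ∈ J, lam i ^ 2 with hT
  have hinner : ⟪a, v⟫ = -S := by
    have hav : ∀ i, a i * v i = if i ∈ J then -(a i * lam i) else 0 := by
      intro i; rw [hvapp]; split <;> ring
    rw [PiLp.inner_apply]
    simp only [RCLike.inner_apply, conj_trivial, mul_comm (v _) (a _), hav]
    rw [Finset.sum_ite_mem, Finset.univ_inter, Finset.sum_neg_distrib, hS]
  have hnorm : ‖v‖ ^ 2 = T := by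
    have hvv : ∀ i, v i * v i = if i ∈ J then lam i ^ 2 else 0 := by
      intro i; rw [hvapp]; split <;> ring
    rw [← real_inner_self_eq_norm_sq, PiLp.inner_apply]
    simp only [RCLike.inner_apply, conj_trivial, hvv]
    rw [Finset.sum_ite_mem, Finset.univ_inter, hT]
  have hφ0 : φ 0 = -S := by rw [hφ]; simp only [zero_smul, add_zero]; rw [← ha]; exact hinner
  have hh1 : h 1 = f (lam + v) + S - L / 2 * T := by
    rw [hh]; simp only [one_smul, one_pow, mul_one, one_mul, hφ0, hnorm]; ring
  -- f lstar ≤ f (lam + v)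
  have hμ : f lstar ≤ f (lam + v) := by
    apply hmin
    intro i
    have := hseg 1 ⟨zero_le_one, le_refl 1⟩ i
    rwa [one_smul] at this
  -- L * T ≤ S
  have hLT : L * T ≤ S := by
    rw [hS, hT, Finset.mul_sum]
    apply Finset.sum_le_sum
    intro i hi
    have h1 := hkey i hi
    have h2 := hlam i
    nlinarith
  rw [hh0, hh1] at h10
  show S ≤ 2 * (f lam - f lstar)
  nlinarith [hμ, h10, hLT]
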